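/- The Average-Impact value λ satisfies Average-Value: for every game (N,v) with |N| = n, (1/2) Σ_{i∈N} φ̄_i(N,v) = 2^{−n} Σ_{C⊆N} v(C). -/

import Mathlib

open Finset

/-- The marginal contribution of player `i` to coalition `C` in a game with
characteristic function `v`: `MC^C_i(N,v) = v(C ∪ {i}) − v(C)`. -/
noncomputable def MC (v : Finset ℕ → ℝ) (C : Finset ℕ) (i : ℕ) : ℝ :=
  v (insert i C) - v C

/-- The Shapley value of player `i` in the game with player set `N` and
characteristic function `v`. -/
noncomputable def shapley (N : Finset ℕ) (v : Finset ℕ → ℝ) (i : ℕ) : ℝ :=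
  ∑ C ∈ (N.erase i).powerset,
    ((C.card.factorial : ℝ) * ((N.card - C.card - 1).factorial : ℝ) /
      (N.card.factorial : ℝ)) * (v (insert i C) - v C)

/-- The average Shapley value `φ̄_i(N,v) = 2^{1−n} Σ_{C ⊆ N, i ∈ C} φ_i(C,v)`. -/
noncomputable def avgShapley (N : Finset ℕ) (v : Finset ℕ → ℝ) (i : ℕ) : ℝ :=
  (2 / 2 ^ N.card : ℝ) * ∑ C ∈ N.powerset.filter (fun C => i ∈ C), shapley C v i

/-- The synergy value `χ^N_v(C) = v(C) − Σ_{i ∈ C} φ̄_i(N,v)`. -/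
noncomputable def synergyValue (N : Finset ℕ) (v : Finset ℕ → ℝ) (C : Finset ℕ) : ℝ :=
  v C - ∑ i ∈ C, avgShapley N v i

/-- Players `i` and `j` are symmetric in the game `(N,v)`. -/
def IsSymmetric (N : Finset ℕ) (v : Finset ℕ → ℝ) (i j : ℕ) : Prop :=
  i ∈ N ∧ j ∈ N ∧ ∀ C ⊆ N \ {i, j}, v (insert i C) = v (insert j C)

/-- Player `i` is a null player in the game `(N,v)`. -/
def IsNullPlayer (N : Finset ℕ) (v : Finset ℕ → ℝ) (i : ℕ) : Prop :=
  i ∈ N ∧ ∀ C ⊆ N, v (insert i C) = v C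

/-- Player `i` is a dummy player in the game `(N,v)`. -/
def IsDummyPlayer (N : Finset ℕ) (v : Finset ℕ → ℝ) (i : ℕ) : Prop :=
  i ∈ N ∧ ∀ C ⊆ N \ {i}, v (insert i C) = v C + v {i}

/-- A game of dummies: every player is a dummy player. -/
def GameOfDummies (N : Finset ℕ) (v : Finset ℕ → ℝ) : Prop :=
  ∀ i ∈ N, IsDummyPlayer N v i

lemma swap_sum (N : Finset ℕ) (g : ℕ → Finset ℕ → ℝ) :
    ∑ i ∈ N, ∑ C ∈ N.powerset.filter (fun C => i ∈ C), g i C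
      = ∑ C ∈ N.powerset, ∑ i ∈ C, g i C := by
  calc ∑ i ∈ N, ∑ C ∈ N.powerset.filter (fun C => i ∈ C), g i C
      = ∑ i ∈ N, ∑ C ∈ N.powerset, if i ∈ C then g i C else 0 := by
        simp [Finset.sum_filter]
    _ = ∑ C ∈ N.powerset, ∑ i ∈ N, if i ∈ C then g i C else 0 := Finset.sum_comm
    _ = ∑ C ∈ N.powerset, ∑ i ∈ C, g i C := by
        refine Finset.sum_congr rfl fun C hC => ?_
        rw [Finset.sum_ite_mem, Finset.inter_eq_right.mpr (Finset.mem_powerset.mp hC)]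

lemma sum_shapley_eq (C : Finset ℕ) (v : Finset ℕ → ℝ) (hv : v ∅ = 0) :
    ∑ i ∈ C, shapley C v i = v C := by
  rcases C.eq_empty_or_nonempty with rfl | hCne
  · simpa using hv.symm
  set n := C.card with hn
  have hnpos : 0 < n := Finset.card_pos.mpr hCne
  set w : ℕ → ℝ := fun s => (s.factorial : ℝ) * ((n - s - 1).factorial : ℝ) / (n.factorial : ℝ) with hw
  -- positive part reindex
  have hA : ∀ i ∈ C, ∑ S ∈ (C.erase i).powerset, w S.card * v (insert i S)
      = ∑ T ∈ C.powerset.filter (fun T => i ∈ T), w (T.card - 1) * v T := by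
    intro i hi
    refine Finset.sum_nbij' (fun S => insert i S) (fun T => T.erase i) ?_ ?_ ?_ ?_ ?_
    · intro S hS
      simp only [Finset.mem_powerset, Finset.mem_filter] at *
      exact ⟨Finset.insert_subset hi ((Finset.subset_erase.mp hS).1), Finset.mem_insert_self i S⟩
    · intro T hT
      simp only [Finset.mem_powerset, Finset.mem_filter] at *
      exact Finset.erase_subset_erase i hT.1
    · intro S hS
      simp only [Finset.mem_powerset] at hS
      exact Finset.erase_insert ((Finset.subset_erase.mp hS).2)
    · intro T hT
      simp only [Finset.mem_powerset, Finset.mem_filter] at hT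
      exact Finset.insert_erase hT.2
    · intro S hS
      simp only [Finset.mem_powerset] at hS
      have : (insert i S).card = S.card + 1 :=
        Finset.card_insert_of_notMem ((Finset.subset_erase.mp hS).2)
      rw [this]; simp
  have hB : ∀ i : ℕ, (C.erase i).powerset = C.powerset.filter (fun S => i ∉ S) := by
    intro i
    ext S
    simp [Finset.mem_powerset, Finset.subset_erase, Finset.mem_filter]
  have hshap : ∀ i ∈ C, shapley C v i =
      (∑ T ∈ C.powerset.filter (fun T => i ∈ T), w (T.card - 1) * v T)
      - ∑ S ∈ C.powerset.filter (fun S => i ∉ S), w S.card * v S := by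
    intro i hi
    rw [shapley, ← hA i hi, ← hB i, ← Finset.sum_sub_distrib]
    exact Finset.sum_congr rfl fun S _ => by rw [hw]; ring
  rw [Finset.sum_congr rfl hshap, Finset.sum_sub_distrib,
    swap_sum C (fun i T => w (T.card - 1) * v T)]
  have hQ : ∑ i ∈ C, ∑ S ∈ C.powerset.filter (fun S => i ∉ S), w S.card * v S
      = ∑ S ∈ C.powerset, ((n - S.card : ℕ) : ℝ) * (w S.card * v S) := by
    calc ∑ i ∈ C, ∑ S ∈ C.powerset.filter (fun S => i ∉ S), w S.card * v S
        = ∑ i ∈ C, ∑ S ∈ C.powerset, if i ∉ S then w S.card * v S else 0 := by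
          simp [Finset.sum_filter]
      _ = ∑ S ∈ C.powerset, ∑ i ∈ C, if i ∉ S then w S.card * v S else 0 := Finset.sum_comm
      _ = ∑ S ∈ C.powerset, ((n - S.card : ℕ) : ℝ) * (w S.card * v S) := by
          refine Finset.sum_congr rfl fun S hS => ?_
          rw [← Finset.sum_filter, Finset.sum_const, ← Finset.sdiff_eq_filter,
            Finset.card_sdiff_of_subset (Finset.mem_powerset.mp hS), nsmul_eq_mul]
  rw [hQ]
  have hP : ∀ T ∈ C.powerset, ∑ i ∈ T, w (T.card - 1) * v T
      = ((T.card : ℕ) : ℝ) * (w (T.card - 1) * v T) := by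
    intro T _
    rw [Finset.sum_const, nsmul_eq_mul]
  rw [Finset.sum_congr rfl hP, ← Finset.sum_sub_distrib]
  -- now pointwise evaluation of the coefficient
  have key : ∀ T ∈ C.powerset,
      ((T.card : ℕ) : ℝ) * (w (T.card - 1) * v T) - ((n - T.card : ℕ) : ℝ) * (w T.card * v T)
      = if T = C then v C else 0 := by
    intro T hT
    have hTC : T ⊆ C := Finset.mem_powerset.mp hT
    have htle : T.card ≤ n := Finset.card_le_card hTC
    have hnf : ((n.factorial : ℝ)) ≠ 0 := by
      exact_mod_cast n.factorial_pos.ne'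
    by_cases hTeq : T = C
    · subst hTeq
      have h1 : n - n = 0 := Nat.sub_self n
      have h2 : n - (n - 1) - 1 = 0 := by omega
      have h3 : (n : ℝ) * ((n - 1).factorial : ℝ) = (n.factorial : ℝ) := by
        norm_cast; exact Nat.mul_factorial_pred hnpos.ne'
      simp only [if_pos rfl, ← hn, h1, h2, hw, Nat.factorial_zero, Nat.cast_zero,
        Nat.cast_one, zero_mul, sub_zero, mul_one]
      field_simp
      rw [if_pos trivial]; linear_combination v T * h3
    · rw [if_neg hTeq]
      rcases T.eq_empty_or_nonempty with rfl | hTne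
      · simp [hv]
      have htpos : 0 < T.card := Finset.card_pos.mpr hTne
      have htlt : T.card < n := Finset.card_lt_card (Finset.ssubset_iff_subset_ne.mpr ⟨hTC, hTeq⟩)
      set t := T.card with ht
      have e1 : n - (t - 1) - 1 = n - t := by omega
      have e2 : (t : ℝ) * ((t - 1).factorial : ℝ) = (t.factorial : ℝ) := by
        norm_cast; exact Nat.mul_factorial_pred htpos.ne'
      have e3 : ((n - t : ℕ) : ℝ) * ((n - t - 1).factorial : ℝ) = ((n - t).factorial : ℝ) := by
        norm_cast; exact Nat.mul_factorial_pred (by omega)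
      have hmain : (t : ℝ) * (((t - 1).factorial : ℝ) * ((n - t).factorial : ℝ))
          = ((n - t : ℕ) : ℝ) * ((t.factorial : ℝ) * ((n - t - 1).factorial : ℝ)) := by
        calc (t : ℝ) * (((t - 1).factorial : ℝ) * ((n - t).factorial : ℝ))
            = ((t : ℝ) * ((t - 1).factorial : ℝ)) * ((n - t).factorial : ℝ) := by ring
          _ = (t.factorial : ℝ) * ((n - t).factorial : ℝ) := by rw [e2]
          _ = (t.factorial : ℝ) * (((n - t : ℕ) : ℝ) * ((n - t - 1).factorial : ℝ)) := by rw [e3]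
          _ = _ := by ring
      simp only [hw, e1]
      linear_combination (v T / (n.factorial : ℝ)) * hmain
  rw [Finset.sum_congr rfl key, Finset.sum_ite_eq' C.powerset C (fun _ => v C), if_pos (Finset.mem_powerset_self C)]

/-- the Average-Impact value `λ^N_v(i) = φ̄_i(N,v)` satisfies
Average-Value (P12): `(1/2) Σ_{i∈N} φ̄_i(N,v) = 2^{−n} Σ_{C⊆N} v(C)`. -/
theorem avgShapley_average_value (N : Finset ℕ) (v : Finset ℕ → ℝ)
    (hv : v ∅ = 0) :
    (1 / 2 : ℝ) * ∑ i ∈ N, avgShapley N v i =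
      (1 / 2 ^ N.card : ℝ) * ∑ C ∈ N.powerset, v C := by
  simp only [avgShapley, ← Finset.mul_sum]
  rw [swap_sum N (fun i C => shapley C v i)]
  rw [Finset.sum_congr rfl (fun C hC => sum_shapley_eq C v hv)]
  ring
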